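/- In the encoding of EBVASS runs as data trees used for the reduction to FO2, conditions (1)–(4) imply that counters never go negative: if in a binary data tree no two D_i-labeled nodes share a data value, no two I_i-labeled nodes share a data value, every D_i-labeled node has a proper descendant labeled I_i with the same data value, and every I_i-labeled node has a proper ancestor labeled D_i with the same data value, then for every node x, the number of I_i-labeled descendants of x (including x) is at least the number of D_i-labeled descendants of x (including x), for each i. -/

import Mathlib

/-- Binary trees over an alphabet `E`. -/
inductive BTree (E : Type) : Type
  | leaf : E → BTree E
  | node : E → BTree E → BTree E → BTree E

def BTree.label {E : Type} : BTree E → E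
  | .leaf a => a
  | .node a _ _ => a

/-- The subtree at a position (`false` = left child, `true` = right child). -/
def BTree.get? {E : Type} : BTree E → List Bool → Option (BTree E)
  | t, [] => some t
  | .leaf _, _ :: _ => none
  | .node _ l r, b :: p => (if b then r else l).get? p

/-- The label at a position, if it exists. -/
def BTree.label? {E : Type} (t : BTree E) (p : List Bool) : Option E :=
  (t.get? p).map BTree.label

/-- The number of nodes of `t` whose label satisfies `g`. -/
def bcount {E : Type} (g : E → Bool) : BTree E → ℕ
  | .leaf a => if g a then 1 else 0
  | .node a l r => (if g a then 1 else 0) + bcount g l + bcount g r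

section

variable {L D : Type} (isD isI : L → Bool) (t : BTree (L × D))

/-- (1) No two `D_i`-labeled nodes share a data value. -/
def CondD_key : Prop :=
  ∀ (p q : List Bool) (l1 l2 : L) (d : D),
    t.label? p = some (l1, d) → t.label? q = some (l2, d) →
    isD l1 = true → isD l2 = true → p = q

/-- (2) No two `I_i`-labeled nodes share a data value. -/
def CondI_key : Prop :=
  ∀ (p q : List Bool) (l1 l2 : L) (d : D),
    t.label? p = some (l1, d) → t.label? q = some (l2, d) →
    isI l1 = true → isI l2 = true → p = q

/-- (3) Every `D_i`-labeled node has a proper descendant labeled `I_i` with the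
same data value. -/
def CondD_matched : Prop :=
  ∀ (p : List Bool) (l : L) (d : D),
    t.label? p = some (l, d) → isD l = true →
    ∃ (r : List Bool) (l' : L), r ≠ [] ∧
      t.label? (p ++ r) = some (l', d) ∧ isI l' = true

/-- (4) Every `I_i`-labeled node has a proper ancestor labeled `D_i` with the
same data value. -/
def CondI_matched : Prop :=
  ∀ (p : List Bool) (l : L) (d : D),
    t.label? p = some (l, d) → isI l = true →
    ∃ (q r : List Bool) (l' : L), p = q ++ r ∧ r ≠ [] ∧
      t.label? q = some (l', d) ∧ isD l' = true

end

namespace BTree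

def poss {E : Type} : BTree E → List (List Bool)
  | .leaf _ => [[]]
  | .node _ l r => [] :: ((poss l).map (false :: ·) ++ (poss r).map (true :: ·))

theorem get?_append {E} (t : BTree E) (p q : List Bool) :
    t.get? (p ++ q) = (t.get? p).bind (·.get? q) := by
  induction p generalizing t with
  | nil => simp [get?]
  | cons b p ih =>
    cases t with
    | leaf a => simp [get?]
    | node a l r => cases b <;> simp [get?, ih]

theorem label?_append {E} (t s : BTree E) (p q : List Bool)
    (h : t.get? p = some s) : t.label? (p ++ q) = s.label? q := by
  simp [label?, get?_append, h]

theorem mem_poss {E} (t : BTree E) (p : List Bool) :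
    p ∈ poss t ↔ (t.get? p).isSome := by
  induction t generalizing p with
  | leaf a => cases p <;> simp [poss, get?]
  | node a l r ihl ihr =>
    cases p with
    | nil => simp [poss, get?]
    | cons b p => cases b <;> simp [poss, get?, ihl, ihr]

theorem nodup_poss {E} (t : BTree E) : (poss t).Nodup := by
  induction t with
  | leaf a => simp [poss]
  | node a l r ihl ihr =>
    simp only [poss, List.nodup_cons, List.mem_append, List.mem_map]
    refine ⟨?_, ?_⟩
    · rintro (⟨x, -, h⟩ | ⟨x, -, h⟩) <;> simp at h
    · refine List.Nodup.append (ihl.map ?_) (ihr.map ?_) ?_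
      · intro x y h; simpa using h
      · intro x y h; simpa using h
      · intro x hx hy
        simp only [List.mem_map] at hx hy
        obtain ⟨u, -, rfl⟩ := hx
        obtain ⟨v, -, h⟩ := hy
        simp at h

theorem bcount_eq_countP {E} (g : E → Bool) (t : BTree E) :
    bcount g t = (poss t).countP (fun p => ((t.label? p).map g).getD false) := by
  induction t with
  | leaf a =>
    simp [bcount, poss, label?, get?, label, List.countP_cons]
    by_cases h : g a <;> simp [h]
  | node a l r ihl ihr =>
    have hl : (fun p => ((BTree.label? (node a l r) (false :: p)).map g).getD false)
        = (fun p => ((l.label? p).map g).getD false) := by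
      funext p; simp [label?, get?]
    have hr : (fun p => ((BTree.label? (node a l r) (true :: p)).map g).getD false)
        = (fun p => ((r.label? p).map g).getD false) := by
      funext p; simp [label?, get?]
    simp only [poss, List.countP_cons, List.countP_append, List.countP_map]
    simp only [Function.comp_def]
    rw [show (fun p => ((BTree.label? (node a l r) (false :: p)).map g).getD false) = _ from hl,
        show (fun p => ((BTree.label? (node a l r) (true :: p)).map g).getD false) = _ from hr]
    simp [bcount, ihl, ihr, label?, get?, label]
    by_cases h : g a <;> simp [h] <;> ring

end BTree


/-- Under conditions (1)–(4) of the EBVASS-to-FO2 encoding, counters never go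
negative: in every subtree, the number of `I_i`-labeled nodes is at least the
number of `D_i`-labeled nodes. -/
theorem encoding_counters_nonneg {L D : Type} (isD isI : L → Bool)
    (t : BTree (L × D))
    (h1 : CondD_key isD t) (h2 : CondI_key isI t)
    (h3 : CondD_matched isD isI t) (h4 : CondI_matched isD isI t) :
    ∀ (p : List Bool) (t' : BTree (L × D)), t.get? p = some t' →
      bcount (fun x => isD x.1) t' ≤ bcount (fun x => isI x.1) t' := by
  intro p0 t' hget
  classical
  rw [BTree.bcount_eq_countP, BTree.bcount_eq_countP,
    List.countP_eq_length_filter, List.countP_eq_length_filter]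
  set S := (BTree.poss t').filter
    (fun q => ((t'.label? q).map (fun x : L × D => isD x.1)).getD false) with hS
  set T := (BTree.poss t').filter
    (fun q => ((t'.label? q).map (fun x : L × D => isI x.1)).getD false) with hT
  have hSnd : S.Nodup := (BTree.nodup_poss t').filter _
  have hTnd : T.Nodup := (BTree.nodup_poss t').filter _
  have memS : ∀ q ∈ S, ∃ l d, t'.label? q = some (l, d) ∧ isD l = true := by
    intro q hq
    obtain ⟨-, h2'⟩ := List.mem_filter.mp hq
    cases hx : t'.label? q with
    | none => rw [hx] at h2'; simp at h2'
    | some a =>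
      obtain ⟨l, d⟩ := a
      rw [hx] at h2'; exact ⟨l, d, by rw [← hx], by simpa using h2'⟩
  have key : ∀ q : List Bool, ∃ q', q ∈ S →
      q' ∈ T ∧ ∀ l d, t'.label? q = some (l, d) →
        ∃ l', t'.label? q' = some (l', d) := by
    intro q
    by_cases hq : q ∈ S
    · obtain ⟨l, d, hld, hDl⟩ := memS q hq
      have hlt : t.label? (p0 ++ q) = some (l, d) := by
        rw [BTree.label?_append t t' p0 q hget]; exact hld
      obtain ⟨r, l', hr, hlab, hIl'⟩ := h3 (p0 ++ q) l d hlt hDl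
      have hlab' : t'.label? (q ++ r) = some (l', d) := by
        rw [← BTree.label?_append t t' p0 (q ++ r) hget, ← List.append_assoc]
        exact hlab
      refine ⟨q ++ r, fun _ => ⟨?_, ?_⟩⟩
      · refine List.mem_filter.mpr ⟨(BTree.mem_poss t' (q ++ r)).mpr ?_, ?_⟩
        · have : (t'.get? (q ++ r)).map BTree.label = some (l', d) := hlab'
          cases hg : t'.get? (q ++ r)
          · rw [hg] at this; simp at this
          · simp
        · rw [hlab']; simpa using hIl'
      · intro l2 d2 hld2
        rw [hld] at hld2
        cases hld2
        exact ⟨l', hlab'⟩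
    · exact ⟨[], fun h => absurd h hq⟩
  choose f hf using key
  have card_le : S.toFinset.card ≤ T.toFinset.card := by
    apply Finset.card_le_card_of_injOn f
    · intro q hq
      rw [Finset.mem_coe, List.mem_toFinset] at hq ⊢
      exact (hf q hq).1
    · intro q1 hq1 q2 hq2 hfeq
      rw [Finset.mem_coe, List.mem_toFinset] at hq1 hq2
      obtain ⟨l1, d1, hld1, hD1⟩ := memS q1 hq1
      obtain ⟨l2, d2, hld2, hD2⟩ := memS q2 hq2
      obtain ⟨l1', hl1'⟩ := (hf q1 hq1).2 l1 d1 hld1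
      obtain ⟨l2', hl2'⟩ := (hf q2 hq2).2 l2 d2 hld2
      rw [hfeq, hl2'] at hl1'
      cases hl1'
      have e1 : t.label? (p0 ++ q1) = some (l1, d1) := by
        rw [BTree.label?_append t t' p0 q1 hget]; exact hld1
      have e2 : t.label? (p0 ++ q2) = some (l2, d1) := by
        rw [BTree.label?_append t t' p0 q2 hget]; exact hld2
      have := h1 (p0 ++ q1) (p0 ++ q2) l1 l2 d1 e1 e2 hD1 hD2
      exact List.append_cancel_left this
  rwa [List.toFinset_card_of_nodup hSnd, List.toFinset_card_of_nodup hTnd] at card_le
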